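/- Every uncountable set S of conditions contains two distinct conditions p0=(A0,n0,U0) and p1=(A1,n1,U1) that are twins and satisfy A0∩A1 < A0∖A1 < A1∖A0. -/

import Mathlib

noncomputable section

/-- The countable ordinals: the ordinals below `ω₁`. -/
abbrev CtblOrd : Type _ := {o : Ordinal // o < (Cardinal.aleph 1).ord}

/-- A condition `p = ⟨A_p, n_p, U_p⟩`: `A_p` is a finite set of countable ordinals,
`n_p ∈ ω`, and `U_p` is a function from `A_p × n_p` to `𝒫(A_p)` (encoded as a total
function that takes the default value `∅` outside its domain) satisfying (P2) and (P3). -/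
instance : Inhabited CtblOrd :=
  ⟨⟨0, Cardinal.lt_ord.2 (by simpa using Cardinal.aleph_pos 1)⟩⟩

lemma ctbl_countable_Iic (c : CtblOrd) : (Set.Iic c).Countable := by
  have hlt : c.1 + 1 < (Cardinal.aleph 1).ord :=
    (Cardinal.isSuccLimit_ord (Cardinal.aleph0_le_aleph 1)).add_one_lt c.2
  rw [Cardinal.countable_iff_lt_aleph_one]
  have hinj : Function.Injective
      (fun x : Set.Iic c => (⟨x.1.1, lt_of_le_of_lt (show x.1.1 ≤ c.1 from x.2) (lt_add_one _)⟩ :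
        Set.Iio (c.1 + 1))) := by
    intro a b hab
    exact Subtype.ext (Subtype.ext (Subtype.mk_eq_mk.1 hab))
  calc Cardinal.mk (Set.Iic c) ≤ Cardinal.mk (Set.Iio (c.1 + 1)) :=
        Cardinal.mk_le_of_injective hinj
    _ = Cardinal.lift _ := Ordinal.mk_Iio_ordinal _
    _ < _ := Cardinal.lift_lt_aleph_one.2 (Cardinal.lt_ord.1 hlt)

lemma finset_claim : ∀ (k : ℕ) (F : Set (Finset CtblOrd)), (∀ A ∈ F, A.card = k) →
    ¬ F.Countable →
    ∃ A0 ∈ F, ∃ A1 ∈ F, A0 ≠ A1 ∧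
      (∀ x ∈ A0 ∩ A1, ∀ y ∈ A0 \ A1, x < y) ∧
      (∀ x ∈ A0 ∩ A1, ∀ z ∈ A1 \ A0, x < z) ∧
      (∀ y ∈ A0 \ A1, ∀ z ∈ A1 \ A0, y < z) := by
  intro k
  induction k with
  | zero =>
    intro F hc hF
    exact absurd (Set.Countable.mono
      (fun A hA => by simpa using Finset.card_eq_zero.1 (hc A hA))
      (Set.countable_singleton ∅)) hF
  | succ k ih =>
    intro F hc hF
    by_cases hδ : ∃ δ : CtblOrd, ¬ ({A ∈ F | A.min = (δ : WithTop CtblOrd)}).Countable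
    · obtain ⟨δ, hδ⟩ := hδ
      set Fδ := {A ∈ F | A.min = (δ : WithTop CtblOrd)} with hFδ
      have hmem : ∀ A ∈ Fδ, δ ∈ A := fun A hA => Finset.mem_of_min hA.2
      have hmin : ∀ A ∈ Fδ, ∀ x ∈ A, δ ≤ x := by
        intro A hA x hx
        have := Finset.min_le hx
        rw [hA.2] at this
        exact_mod_cast this
      set F' := (fun A : Finset CtblOrd => A.erase δ) '' Fδ with hF'
      have hcard' : ∀ B ∈ F', B.card = k := by
        rintro B ⟨A, hA, rfl⟩
        rw [Finset.card_erase_of_mem (hmem A hA), hc A hA.1]; omega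
      have hF'unc : ¬ F'.Countable := by
        intro hcnt
        apply hδ
        have : Fδ ⊆ (fun B : Finset CtblOrd => insert δ B) '' F' := by
          intro A hA
          exact ⟨A.erase δ, ⟨A, hA, rfl⟩, Finset.insert_erase (hmem A hA)⟩
        exact Set.Countable.mono this (hcnt.image _)
      obtain ⟨A0', hA0', A1', hA1', hne', h1', h2', h3'⟩ := ih F' hcard' hF'unc
      obtain ⟨A0, hA0, hA0e⟩ := hA0'
      obtain ⟨A1, hA1, hA1e⟩ := hA1'
      refine ⟨A0, hA0.1, A1, hA1.1, ?_, ?_, ?_, ?_⟩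
      · intro h; exact hne' (by rw [← hA0e, ← hA1e, h])
      · intro x hx y hy
        have hyA : y ∈ A0 \ A1 := hy
        have hyδ : y ≠ δ := by
          intro h; rw [Finset.mem_sdiff] at hy; exact hy.2 (h ▸ hmem A1 hA1)
        rcases Finset.mem_inter.1 hx with ⟨hx0, hx1⟩
        by_cases hxδ : x = δ
        · subst hxδ
          exact lt_of_le_of_ne (hmin A0 hA0 y (Finset.mem_sdiff.1 hy).1) (Ne.symm hyδ)
        · apply h1' x ?_ y ?_
          · rw [← hA0e, ← hA1e]
            simp [Finset.mem_inter, Finset.mem_erase, hxδ, hx0, hx1]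
          · rw [← hA0e, ← hA1e]
            rcases Finset.mem_sdiff.1 hy with ⟨hy0, hy1⟩
            simp only [Finset.mem_sdiff, Finset.mem_erase]
            exact ⟨⟨hyδ, hy0⟩, fun h => hy1 h.2⟩
      · intro x hx z hz
        have hzδ : z ≠ δ := by
          intro h; rw [Finset.mem_sdiff] at hz; exact hz.2 (h ▸ hmem A0 hA0)
        rcases Finset.mem_inter.1 hx with ⟨hx0, hx1⟩
        by_cases hxδ : x = δ
        · subst hxδ
          exact lt_of_le_of_ne (hmin A1 hA1 z (Finset.mem_sdiff.1 hz).1) (Ne.symm hzδ)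
        · apply h2' x ?_ z ?_
          · rw [← hA0e, ← hA1e]
            simp [Finset.mem_inter, Finset.mem_erase, hxδ, hx0, hx1]
          · rw [← hA0e, ← hA1e]
            rcases Finset.mem_sdiff.1 hz with ⟨hz1, hz0⟩
            simp only [Finset.mem_sdiff, Finset.mem_erase]
            exact ⟨⟨hzδ, hz1⟩, fun h => hz0 h.2⟩
      · intro y hy z hz
        have hyδ : y ≠ δ := by
          intro h; rw [Finset.mem_sdiff] at hy; exact hy.2 (h ▸ hmem A1 hA1)
        have hzδ : z ≠ δ := by
          intro h; rw [Finset.mem_sdiff] at hz; exact hz.2 (h ▸ hmem A0 hA0)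
        apply h3' y ?_ z ?_
        · rw [← hA0e, ← hA1e]
          rcases Finset.mem_sdiff.1 hy with ⟨hy0, hy1⟩
          simp only [Finset.mem_sdiff, Finset.mem_erase]
          exact ⟨⟨hyδ, hy0⟩, fun h => hy1 h.2⟩
        · rw [← hA0e, ← hA1e]
          rcases Finset.mem_sdiff.1 hz with ⟨hz1, hz0⟩
          simp only [Finset.mem_sdiff, Finset.mem_erase]
          exact ⟨⟨hzδ, hz1⟩, fun h => hz0 h.2⟩
    · push_neg at hδ
      have hne : F.Nonempty := Set.nonempty_iff_ne_empty.2
        (fun h => hF (h ▸ Set.countable_empty))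
      obtain ⟨A0, hA0⟩ := hne
      have hA0ne : A0.Nonempty := Finset.card_pos.1 (by rw [hc A0 hA0]; omega)
      set c := A0.max' hA0ne with hc0
      have hG : ({A ∈ F | A.min ≤ (c : WithTop CtblOrd)}).Countable := by
        have hsub : {A ∈ F | A.min ≤ (c : WithTop CtblOrd)} ⊆
            ⋃ δ ∈ Set.Iic c, {A ∈ F | A.min = (δ : WithTop CtblOrd)} := by
          rintro A ⟨hAF, hAm⟩
          have hAne : A.Nonempty := Finset.card_pos.1 (by rw [hc A hAF]; omega)
          obtain ⟨m, hm⟩ := Finset.min_of_nonempty hAne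
          have hmc : m ≤ c := by rw [hm] at hAm; exact_mod_cast hAm
          exact Set.mem_biUnion hmc ⟨hAF, hm⟩
        exact Set.Countable.mono hsub
          (Set.Countable.biUnion (ctbl_countable_Iic c) (fun δ _ => hδ δ))
      have : ¬ (F \ {A ∈ F | A.min ≤ (c : WithTop CtblOrd)}).Countable := by
        intro hcnt
        exact hF (by simpa using (hcnt.union hG).mono (fun A hA => by
          by_cases h : A.min ≤ (c : WithTop CtblOrd)
          · exact Or.inr ⟨hA, h⟩
          · exact Or.inl ⟨hA, fun hh => h hh.2⟩))
      obtain ⟨A1, hA1⟩ : (F \ {A ∈ F | A.min ≤ (c : WithTop CtblOrd)}).Nonempty :=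
        Set.nonempty_iff_ne_empty.2 (fun h => this (h ▸ Set.countable_empty))
      rcases hA1 with ⟨hA1F, hA1m⟩
      have hlt : ∀ y ∈ A0, ∀ z ∈ A1, y < z := by
        intro y hy z hz
        have h1 : (c : WithTop CtblOrd) < A1.min := by
          simp only [Set.mem_setOf_eq, hA1F, true_and, not_le] at hA1m
          exact hA1m
        have h2 : A1.min ≤ (z : WithTop CtblOrd) := Finset.min_le hz
        have : (c : WithTop CtblOrd) < (z : WithTop CtblOrd) := lt_of_lt_of_le h1 h2
        have hcz : c < z := by exact_mod_cast this
        exact lt_of_le_of_lt (Finset.le_max' A0 y hy) hcz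
      have hdisj : A0 ∩ A1 = ∅ := by
        rw [Finset.eq_empty_iff_forall_notMem]
        intro x hx
        rcases Finset.mem_inter.1 hx with ⟨h0, h1⟩
        exact absurd (hlt x h0 x h1) (lt_irrefl x)
      refine ⟨A0, hA0, A1, hA1F, ?_, ?_, ?_, ?_⟩
      · intro h
        obtain ⟨a, ha⟩ := hA0ne
        exact absurd (hlt a ha a (h ▸ ha)) (lt_irrefl a)
      · intro x hx; rw [hdisj] at hx; exact absurd hx (Finset.notMem_empty x)
      · intro x hx; rw [hdisj] at hx; exact absurd hx (Finset.notMem_empty x)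
      · intro y hy z hz
        exact hlt y (Finset.mem_sdiff.1 hy).1 z (Finset.mem_sdiff.1 hz).1


/-- enumeration of a finite set of countable ordinals in increasing order -/
def fenum (A : Finset CtblOrd) : ℕ → CtblOrd := fun j =>
  if h : j < A.card then A.orderEmbOfFin rfl ⟨j, h⟩ else default

/-- index of an element in a finite set -/
def nidx (A : Finset CtblOrd) (α : CtblOrd) : ℕ := (A.filter (· < α)).card

lemma fenum_eq {A : Finset CtblOrd} {j : ℕ} (h : j < A.card) :
    fenum A j = A.orderEmbOfFin rfl ⟨j, h⟩ := dif_pos h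

lemma fenum_mem {A : Finset CtblOrd} {j : ℕ} (h : j < A.card) : fenum A j ∈ A := by
  rw [fenum_eq h]; exact Finset.orderEmbOfFin_mem A rfl _

lemma fenum_strictMono {A : Finset CtblOrd} {j l : ℕ} (hjl : j < l) (hl : l < A.card) :
    fenum A j < fenum A l := by
  rw [fenum_eq (lt_trans hjl hl), fenum_eq hl]
  exact (A.orderEmbOfFin rfl).strictMono (by exact hjl)

lemma fenum_surj {A : Finset CtblOrd} {α : CtblOrd} (hα : α ∈ A) :
    ∃ j, ∃ h : j < A.card, fenum A j = α := by
  have : α ∈ Set.range (A.orderEmbOfFin rfl) := by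
    rw [Finset.range_orderEmbOfFin]; exact hα
  obtain ⟨i, hi⟩ := this
  exact ⟨i.1, i.2, by rw [fenum_eq i.2]; simpa using hi⟩

lemma nidx_fenum {A : Finset CtblOrd} {j : ℕ} (h : j < A.card) :
    nidx A (fenum A j) = j := by
  have himg : A.filter (· < fenum A j) =
      (Finset.Iio (⟨j, h⟩ : Fin A.card)).image (A.orderEmbOfFin rfl) := by
    ext x
    simp only [Finset.mem_filter, Finset.mem_image, Finset.mem_Iio]
    constructor
    · rintro ⟨hxA, hxlt⟩
      have hr : x ∈ Set.range (A.orderEmbOfFin rfl) := by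
        rw [Finset.range_orderEmbOfFin]; exact hxA
      obtain ⟨i, rfl⟩ := hr
      refine ⟨i, ?_, rfl⟩
      rw [fenum_eq h] at hxlt
      exact (A.orderEmbOfFin rfl).lt_iff_lt.1 hxlt
    · rintro ⟨i, hij, rfl⟩
      refine ⟨Finset.orderEmbOfFin_mem A rfl i, ?_⟩
      rw [fenum_eq h]
      exact (A.orderEmbOfFin rfl).lt_iff_lt.2 hij
  rw [nidx, himg, Finset.card_image_of_injective _ (A.orderEmbOfFin rfl).injective,
    Fin.card_Iio]

lemma fenum_nidx {A : Finset CtblOrd} {α : CtblOrd} (hα : α ∈ A) :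
    fenum A (nidx A α) = α := by
  obtain ⟨j, h, rfl⟩ := fenum_surj hα
  rw [nidx_fenum h]

lemma nidx_lt {A : Finset CtblOrd} {α : CtblOrd} (hα : α ∈ A) : nidx A α < A.card := by
  obtain ⟨j, h, rfl⟩ := fenum_surj hα
  rw [nidx_fenum h]; exact h

lemma nidx_strictMono {A : Finset CtblOrd} {α β : CtblOrd} (hα : α ∈ A) (hab : α < β) :
    nidx A α < nidx A β := by
  have hsub : A.filter (· < α) ⊆ A.filter (· < β) := by
    intro x hx
    rcases Finset.mem_filter.1 hx with ⟨h1, h2⟩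
    exact Finset.mem_filter.2 ⟨h1, lt_trans h2 hab⟩
  exact Finset.card_lt_card ((Finset.ssubset_iff_of_subset hsub).2
    ⟨α, Finset.mem_filter.2 ⟨hα, hab⟩,
      fun hc => absurd (Finset.mem_filter.1 hc).2 (lt_irrefl α)⟩)

structure Cond where
  /-- the finite set `A_p ⊆ ω₁` -/
  A : Finset CtblOrd
  /-- the natural number `n_p` -/
  n : ℕ
  /-- the function `U_p : A_p × n_p → 𝒫(A_p)` -/
  U : CtblOrd → ℕ → Finset CtblOrd
  default_empty : ∀ α i, ¬(α ∈ A ∧ i < n) → U α i = ∅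
  mem_powerset : ∀ α ∈ A, ∀ i < n, U α i ⊆ A
  P2_self : ∀ α ∈ A, ∀ i < n, α ∈ U α i
  P2_mono : ∀ α ∈ A, ∀ i, 1 ≤ i → i < n → U α i ⊆ U α (i - 1)
  P3 : ∀ α ∈ A, ∀ β ∈ A, ∀ i < n, β ∈ U α i → U α i ⊆ U β 0 → β ≤ α

/-- `Cond.le q p` means `q ≤ p`: clauses (a), (b), (c), (d1), (d2). -/
def Cond.le (q p : Cond) : Prop :=
  p.A ⊆ q.A ∧ p.n ≤ q.n ∧
  (∀ α ∈ p.A, ∀ i < p.n, p.U α i = q.U α i ∩ p.A) ∧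
  (∀ α ∈ p.A, ∀ i < p.n, ∀ β ∈ p.A, ∀ j < p.n,
    p.U α i ∩ p.U β j = ∅ → q.U α i ∩ q.U β j = ∅) ∧
  (∀ α ∈ p.A, ∀ i < p.n, ∀ β ∈ p.A, ∀ j < p.n,
    p.U α i ⊆ p.U β j → q.U α i ⊆ q.U β j)

/-- `p0` and `p1` are twins with twin function `σ`: `n₀ = n₁`, `|A₀| = |A₁|`, `σ` is the
(unique) order preserving bijection from `A₀` onto `A₁`, (I1) `σ` is the identity on
`A₀ ∩ A₁`, and (I2) `U₁(σ(α), i) = σ''U₀(α, i)` for all `α ∈ A₀`, `i < n₀`. -/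
def Twins (p0 p1 : Cond) (σ : CtblOrd → CtblOrd) : Prop :=
  p0.n = p1.n ∧ p0.A.card = p1.A.card ∧
  p0.A.image σ = p1.A ∧
  (∀ α ∈ p0.A, ∀ β ∈ p0.A, α < β → σ α < σ β) ∧
  (∀ δ ∈ p0.A ∩ p1.A, σ δ = δ) ∧
  (∀ α ∈ p0.A, ∀ i < p0.n, p1.U (σ α) i = (p0.U α i).image σ)

/-- The triple `⟨A, n, U⟩` extends the condition `p` in the ordering of `P`:
clauses (a), (b), (c), (d1), (d2). -/
def ExtendsTriple (A : Finset CtblOrd) (n : ℕ) (U : CtblOrd → ℕ → Finset CtblOrd)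
    (p : Cond) : Prop :=
  p.A ⊆ A ∧ p.n ≤ n ∧
  (∀ α ∈ p.A, ∀ i < p.n, p.U α i = U α i ∩ p.A) ∧
  (∀ α ∈ p.A, ∀ i < p.n, ∀ β ∈ p.A, ∀ j < p.n,
    p.U α i ∩ p.U β j = ∅ → U α i ∩ U β j = ∅) ∧
  (∀ α ∈ p.A, ∀ i < p.n, ∀ β ∈ p.A, ∀ j < p.n,
    p.U α i ⊆ p.U β j → U α i ⊆ U β j)

/-- the isomorphism type of a condition -/
def ctyp (p : Cond) : ℕ × ℕ × Finset (ℕ × ℕ × ℕ) :=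
  (p.n, p.A.card,
    ((Finset.range p.A.card) ×ˢ (Finset.range p.n) ×ˢ (Finset.range p.A.card)).filter
      (fun x => fenum p.A x.2.2 ∈ p.U (fenum p.A x.1) x.2.1))

lemma ctyp_corr {p q : Cond} (h : ctyp p = ctyp q) :
    p.n = q.n ∧ p.A.card = q.A.card ∧
    ∀ j l i, j < p.A.card → l < p.A.card → i < p.n →
      (fenum p.A l ∈ p.U (fenum p.A j) i ↔ fenum q.A l ∈ q.U (fenum q.A j) i) := by
  have hn : p.n = q.n := congrArg Prod.fst h
  have hk : p.A.card = q.A.card := congrArg (fun x => x.2.1) h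
  refine ⟨hn, hk, fun j l i hj hl hi => ?_⟩
  have hfil := congrArg (fun x : ℕ × ℕ × Finset (ℕ × ℕ × ℕ) => x.2.2) h
  simp only [ctyp] at hfil
  have hmem := congrArg (fun s : Finset (ℕ × ℕ × ℕ) => (j, i, l) ∈ s) hfil
  simp only [Finset.mem_filter, Finset.mem_product, Finset.mem_range, eq_iff_iff] at hmem
  constructor
  · intro hin
    exact (hmem.1 ⟨⟨hj, hi, hl⟩, hin⟩).2
  · intro hin
    exact (hmem.2 ⟨⟨hk ▸ hj, hn ▸ hi, hk ▸ hl⟩, hin⟩).2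

lemma Cond.ext' {p q : Cond} (hA : p.A = q.A) (hn : p.n = q.n) (hU : p.U = q.U) :
    p = q := by
  cases p; cases q
  cases hA; cases hn; cases hU
  rfl

lemma eq_of_ctyp_eq {p q : Cond} (ht : ctyp p = ctyp q) (hA : p.A = q.A) : p = q := by
  obtain ⟨hn, hk, hcorr⟩ := ctyp_corr ht
  apply Cond.ext' hA hn
  have hE : fenum q.A = fenum p.A := by rw [hA]
  rw [hE] at hcorr
  funext α i
  by_cases hd : α ∈ p.A ∧ i < p.n
  · obtain ⟨hα, hi⟩ := hd
    obtain ⟨j, hj, rfl⟩ := fenum_surj hα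
    ext γ
    constructor
    · intro hγ
      have hγA : γ ∈ p.A := p.mem_powerset _ (fenum_mem hj) i hi hγ
      obtain ⟨l, hl, rfl⟩ := fenum_surj hγA
      exact (hcorr j l i hj hl hi).1 hγ
    · intro hγ
      have hγA : γ ∈ p.A := by
        rw [hA]
        exact q.mem_powerset _ (by rw [← hA]; exact fenum_mem hj) i (hn ▸ hi) hγ
      obtain ⟨l, hl, rfl⟩ := fenum_surj hγA
      exact (hcorr j l i hj hl hi).2 hγ
  · rw [p.default_empty α i hd, q.default_empty α i (by rw [← hA, ← hn]; exact hd)]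

/-- Every uncountable set `S` of conditions contains two distinct conditions `p0`, `p1` that are twins and satisfy `A0∩A1 < A0∖A1 < A1∖A0`. -/
theorem uncountable_contains_twins
    (S : Set Cond) (hS : ¬ S.Countable)
    :
    ∃ p0 ∈ S, ∃ p1 ∈ S, p0 ≠ p1 ∧ ∃ σ : CtblOrd → CtblOrd,
      Twins p0 p1 σ ∧
      (∀ x ∈ p0.A ∩ p1.A, ∀ y ∈ p0.A \ p1.A, x < y) ∧
      (∀ y ∈ p0.A \ p1.A, ∀ z ∈ p1.A \ p0.A, y < z) := by
  have hT : ∃ t : ℕ × ℕ × Finset (ℕ × ℕ × ℕ), ¬ ({p ∈ S | ctyp p = t}).Countable := by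
    by_contra hcon
    push_neg at hcon
    apply hS
    have hU : S ⊆ ⋃ t : ℕ × ℕ × Finset (ℕ × ℕ × ℕ), {p ∈ S | ctyp p = t} := by
      intro p hp
      exact Set.mem_iUnion.2 ⟨ctyp p, hp, rfl⟩
    exact Set.Countable.mono hU (Set.countable_iUnion hcon)
  obtain ⟨t, ht⟩ := hT
  set St := {p ∈ S | ctyp p = t} with hSt
  have hinj : Set.InjOn Cond.A St := by
    intro p hp q hq hA
    exact eq_of_ctyp_eq (hp.2.trans hq.2.symm) hA
  have hFunc : ¬ (Cond.A '' St).Countable := fun h =>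
    ht (Set.countable_of_injective_of_countable_image hinj h)
  have hcards : ∀ A ∈ Cond.A '' St, A.card = t.2.1 := by
    rintro A ⟨p, hp, rfl⟩
    have h2 : (ctyp p).2.1 = t.2.1 := by rw [hp.2]
    exact h2
  obtain ⟨A0, hA0, A1, hA1, hne, hI, hIz, hD⟩ := finset_claim t.2.1 _ hcards hFunc
  obtain ⟨p0, hp0, rfl⟩ := hA0
  obtain ⟨p1, hp1, rfl⟩ := hA1
  obtain ⟨hn, hk, hcorr⟩ := ctyp_corr (hp0.2.trans hp1.2.symm)
  set σ : CtblOrd → CtblOrd :=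
    fun α => if h : α ∈ p0.A then fenum p1.A (nidx p0.A α) else α with hσ
  have hσdef : ∀ α ∈ p0.A, σ α = fenum p1.A (nidx p0.A α) := fun α h => dif_pos h
  have hσmem : ∀ α ∈ p0.A, σ α ∈ p1.A := by
    intro α h
    rw [hσdef α h]
    exact fenum_mem (hk ▸ nidx_lt h)
  have hmono : ∀ α ∈ p0.A, ∀ β ∈ p0.A, α < β → σ α < σ β := by
    intro α hα β hβ hab
    rw [hσdef α hα, hσdef β hβ]
    exact fenum_strictMono (nidx_strictMono hα hab) (hk ▸ nidx_lt hβ)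
  have hσe : ∀ j, j < p0.A.card → σ (fenum p0.A j) = fenum p1.A j := by
    intro j hj
    rw [hσdef _ (fenum_mem hj), nidx_fenum hj]
  have himage : p0.A.image σ = p1.A := by
    apply Finset.Subset.antisymm
    · intro γ hγ
      obtain ⟨α, hα, rfl⟩ := Finset.mem_image.1 hγ
      exact hσmem α hα
    · intro γ hγ
      obtain ⟨l, hl, rfl⟩ := fenum_surj hγ
      have hl0 : l < p0.A.card := by rw [hk]; exact hl
      exact Finset.mem_image.2 ⟨fenum p0.A l, fenum_mem hl0, hσe l hl0⟩
  have hfilters : ∀ δ ∈ p0.A ∩ p1.A, p0.A.filter (· < δ) = p1.A.filter (· < δ) := by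
    intro δ hδ
    ext x
    simp only [Finset.mem_filter]
    constructor
    · rintro ⟨hx, hlt⟩
      refine ⟨?_, hlt⟩
      by_contra hxt
      exact absurd (hI δ hδ x (Finset.mem_sdiff.2 ⟨hx, hxt⟩)) (not_lt.2 (le_of_lt hlt))
    · rintro ⟨hx, hlt⟩
      refine ⟨?_, hlt⟩
      by_contra hxt
      exact absurd (hIz δ hδ x (Finset.mem_sdiff.2 ⟨hx, hxt⟩)) (not_lt.2 (le_of_lt hlt))
  have hid : ∀ δ ∈ p0.A ∩ p1.A, σ δ = δ := by
    intro δ hδ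
    rcases Finset.mem_inter.1 hδ with ⟨h0, h1⟩
    rw [hσdef δ h0]
    have hnn : nidx p0.A δ = nidx p1.A δ := by
      unfold nidx
      rw [hfilters δ hδ]
    rw [hnn, fenum_nidx h1]
  have hI2 : ∀ α ∈ p0.A, ∀ i < p0.n, p1.U (σ α) i = (p0.U α i).image σ := by
    intro α hα i hi
    obtain ⟨j, hj, rfl⟩ := fenum_surj hα
    rw [hσe j hj]
    ext γ
    constructor
    · intro hγ
      have hγ1 : γ ∈ p1.A :=
        p1.mem_powerset _ (fenum_mem (hk ▸ hj)) i (hn ▸ hi) hγ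
      obtain ⟨l, hl, rfl⟩ := fenum_surj hγ1
      have hl0 : l < p0.A.card := by rw [hk]; exact hl
      exact Finset.mem_image.2 ⟨fenum p0.A l, (hcorr j l i hj hl0 hi).2 hγ, hσe l hl0⟩
    · intro hγ
      obtain ⟨β, hβ, rfl⟩ := Finset.mem_image.1 hγ
      have hβ0 : β ∈ p0.A := p0.mem_powerset _ (fenum_mem hj) i hi hβ
      obtain ⟨l, hl, rfl⟩ := fenum_surj hβ0
      rw [hσe l hl]
      exact (hcorr j l i hj hl hi).1 hβ
  exact ⟨p0, hp0.1, p1, hp1.1, fun h => hne (congrArg Cond.A h), σ,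
    ⟨hn, hk, himage, hmono, hid, hI2⟩, hI, hD⟩
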